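/- Let 0 < ρ ≤ ∞, I = (0, ρ) ⊂ ℝ, α > 0, k ≥ 0 an integer, g(x) = α·x^k, and f : I → ℝ. Suppose for every 3×3 rank-one positive semidefinite matrix A with entries in I, the matrix with g applied to entries in positions {1,2}×{1,2} and to (3,3), and f applied to all other entries, is positive semidefinite. Then there exists c ∈ [−1, 1] with f(x) = c·g(x) for all x ∈ I. -/

import Mathlib

open Matrix

private lemma aux_key (ρ : EReal)
    (α : ℝ) (hα : 0 < α) (k : ℕ) (f : ℝ → ℝ)
    (h : ∀ A : Matrix (Fin 3) (Fin 3) ℝ, A.PosSemidef → A.rank = 1 →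
      (∀ i j, 0 < A i j ∧ (A i j : EReal) < ρ) →
      (Matrix.of fun i j : Fin 3 =>
        if (i.val ≤ 1 ∧ j.val ≤ 1) ∨ (i = 2 ∧ j = 2)
        then α * A i j ^ k else f (A i j)).PosSemidef)
    (z w : ℝ) (hz : 0 < z) (hzw : z ≤ w) (hw : (w : EReal) < ρ) :
    f z * w ^ k = f w * z ^ k ∧ f w ^ 2 ≤ (α * w ^ k) ^ 2 := by
  have hw0 : 0 < w := lt_of_lt_of_le hz hzw
  have hwne : w ≠ 0 := ne_of_gt hw0
  set A : Matrix (Fin 3) (Fin 3) ℝ :=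
    Matrix.of fun i j => (![z,w,w] : Fin 3 → ℝ) i * ![z,w,w] j / w with hA
  have hpsd : A.PosSemidef := by
    refine Matrix.PosSemidef.of_dotProduct_mulVec_nonneg ?_ ?_
    · ext i j
      simp [Matrix.conjTranspose_apply, hA]
      ring
    · intro x
      have hx : star x = x := star_trivial x
      rw [hx]
      have : x ⬝ᵥ A *ᵥ x = (z * x 0 + w * x 1 + w * x 2)^2 / w := by
        simp [Matrix.mulVec, dotProduct, Fin.sum_univ_three, hA]
        field_simp
      rw [this]
      positivity
  have hrank : A.rank = 1 := by
    have hle : A.rank ≤ 1 := by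
      have hfac : A = (Matrix.replicateCol Unit (![z,w,w] : Fin 3 → ℝ)) *
          (Matrix.replicateRow Unit (fun j => ![z,w,w] j / w)) := by
        ext i j
        fin_cases i <;> fin_cases j <;>
          simp only [Matrix.mul_apply, hA, Matrix.of_apply, Matrix.replicateCol_apply,
            Matrix.replicateRow_apply, Fintype.univ_unit, Finset.sum_singleton] <;> ring
      calc A.rank ≤ (Matrix.replicateCol Unit (![z,w,w] : Fin 3 → ℝ)).rank := by
              rw [hfac]; exact Matrix.rank_mul_le_left _ _
        _ ≤ Fintype.card Unit := Matrix.rank_le_card_width _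
        _ = 1 := by simp
    have hne : A.rank ≠ 0 := by
      intro h0
      rw [Matrix.rank] at h0
      rw [Submodule.finrank_eq_zero] at h0
      have hm : A.mulVecLin ![1,0,0] = 0 := by
        have : A.mulVecLin ![1,0,0] ∈ LinearMap.range A.mulVecLin := ⟨_, rfl⟩
        rw [h0] at this
        simpa using this
      have := congrFun hm 0
      simp [Matrix.mulVecLin_apply, Matrix.mulVec, dotProduct,
        Fin.sum_univ_three, hA] at this
      rcases this with h1 | h1 <;> linarith
    omega
  have hent : ∀ i j, 0 < A i j ∧ (A i j : EReal) < ρ := by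
    intro i j
    have hvpos : ∀ i : Fin 3, 0 < (![z,w,w] : Fin 3 → ℝ) i := by
      intro i; fin_cases i <;> simpa using by first | exact hz | exact hw0
    have hvle : ∀ i : Fin 3, (![z,w,w] : Fin 3 → ℝ) i ≤ w := by
      intro i; fin_cases i <;> simpa using by first | exact hzw | exact le_refl w
    have h1 : 0 < A i j := by
      have := hvpos i; have := hvpos j
      simp only [hA, Matrix.of_apply]
      positivity
    refine ⟨h1, ?_⟩
    have h2 : A i j ≤ w := by
      simp only [hA, Matrix.of_apply]
      rw [div_le_iff₀ hw0]
      have hi := hvle i; have hj := hvle j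
      have hip := hvpos i; have hjp := hvpos j
      nlinarith
    exact lt_of_le_of_lt (EReal.coe_le_coe_iff.2 h2) hw
  have hB := h A hpsd hrank hent
  -- abbreviations
  set gz : ℝ := α * z ^ k with hgz
  set gw : ℝ := α * w ^ k with hgw
  have hgwpos : 0 < gw := by positivity
  have hgzpos : 0 < gz := by positivity
  -- the quadratic form of B on a vector x
  have hQ : ∀ x : Fin 3 → ℝ, 0 ≤
      x 0 * (α * (z*z/w)^k * x 0 + α * z^k * x 1 + f z * x 2) +
      x 1 * (α * z^k * x 0 + α * w^k * x 1 + f w * x 2) +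
      x 2 * (f z * x 0 + f w * x 1 + α * w^k * x 2) := by
    intro x
    have := hB.dotProduct_mulVec_nonneg x
    rw [star_trivial] at this
    have e1 : z * w / w = z := by field_simp
    have e2 : w * z / w = z := by field_simp
    have e3 : w * w / w = w := by field_simp
    simpa [Matrix.mulVec, dotProduct, Fin.sum_univ_three, hA,
      Matrix.vecHead, Matrix.vecTail, e1, e2, e3, mul_comm] using this
  constructor
  · -- main relation
    have hkey : ∀ t : ℝ, 0 ≤ 2 * t * (gw * f z - gz * f w) + gw := by
      intro t
      have hq := hQ ![gw * t, -gz * t, 1]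
      have hpow : (z*z/w)^k = z^k * z^k / w^k := by
        rw [div_pow, mul_pow]
      simp only [Matrix.cons_val_zero, Matrix.cons_val_one, Matrix.head_cons,
        Matrix.cons_val_two, Matrix.tail_cons] at hq
      have hwk : (0:ℝ) < w^k := by positivity
      have : gw * t * (α * (z*z/w)^k * (gw * t) + α * z^k * (-gz * t) + f z * 1) +
          (-gz * t) * (α * z^k * (gw * t) + α * w^k * (-gz * t) + f w * 1) +
          1 * (f z * (gw * t) + f w * (-gz * t) + α * w^k * 1)
          = 2 * t * (gw * f z - gz * f w) + gw := by
        rw [hpow, hgz, hgw]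
        field_simp
        ring
      linarith [this ▸ hq]
    have hD : gw * f z - gz * f w = 0 := by
      by_contra hD0
      have ht := hkey (-(gw + 1) / (2 * (gw * f z - gz * f w)))
      have : 2 * (-(gw + 1) / (2 * (gw * f z - gz * f w))) * (gw * f z - gz * f w)
          = -(gw + 1) := by
        field_simp
      rw [this] at ht
      linarith
    have : α * (f z * w ^ k - f w * z ^ k) = 0 := by
      rw [hgw, hgz] at hD; ring_nf at hD ⊢; linarith
    have := mul_eq_zero.1 this
    rcases this with h1 | h1
    · exact absurd h1 (ne_of_gt hα)
    · linarith
  · -- bound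
    have hq := hQ ![0, gw, -f w]
    simp only [Matrix.cons_val_zero, Matrix.cons_val_one, Matrix.head_cons,
      Matrix.cons_val_two, Matrix.tail_cons] at hq
    rw [← hgw] at hq
    nlinarith [hgwpos]

theorem forbidden_block_with_diag_forces_scalar (ρ : EReal) (hρ : 0 < ρ)
    (α : ℝ) (hα : 0 < α) (k : ℕ) (f : ℝ → ℝ)
    (h : ∀ A : Matrix (Fin 3) (Fin 3) ℝ, A.PosSemidef → A.rank = 1 →
      (∀ i j, 0 < A i j ∧ (A i j : EReal) < ρ) →
      (Matrix.of fun i j : Fin 3 =>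
        if (i.val ≤ 1 ∧ j.val ≤ 1) ∨ (i = 2 ∧ j = 2)
        then α * A i j ^ k else f (A i j)).PosSemidef) :
    ∃ c ∈ Set.Icc (-1 : ℝ) 1,
      ∀ x : ℝ, 0 < x → (x : EReal) < ρ → f x = c * (α * x ^ k) := by
  obtain ⟨t, ht0, htρ⟩ : ∃ t : ℝ, 0 < t ∧ (t : EReal) < ρ := by
    obtain ⟨c, hc0, hcρ⟩ := exists_between hρ
    have hct : c ≠ ⊤ := by
      intro hc; rw [hc] at hcρ; exact (not_top_lt hcρ)
    have hcb : c ≠ ⊥ := by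
      intro hc; rw [hc] at hc0; exact (not_lt_bot hc0)
    lift c to ℝ using ⟨hct, hcb⟩
    exact ⟨c, by exact_mod_cast hc0, hcρ⟩
  have hgt : (0:ℝ) < α * t ^ k := by positivity
  refine ⟨f t / (α * t ^ k), ?_, ?_⟩
  · have hb := (aux_key ρ α hα k f h t t ht0 le_rfl htρ).2
    constructor
    · rw [le_div_iff₀ hgt]; nlinarith
    · rw [div_le_iff₀ hgt]; nlinarith
  · intro x hx0 hxρ
    have hxk : (0:ℝ) < α * x ^ k := by positivity
    rcases le_total x t with hxt | htx
    · have := (aux_key ρ α hα k f h x t hx0 hxt htρ).1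
      field_simp
      nlinarith [this]
    · have := (aux_key ρ α hα k f h t x ht0 htx hxρ).1
      field_simp
      nlinarith [this]
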